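/- Let K = k((t)) with ring of integers O_K = k[[t]], L/K a cyclic Galois extension of degree r with Φ generating Gal(L/K), and let Λ_{L,1} ⊂ D_{L,1} consist of Ore polynomials with all coefficients of nonnegative valuation. Let ε̄ : Λ_{L,1} → End_k(O_L/tO_L) be the reduction mod t of the evaluation map T ↦ Φ. Then for all f ∈ Λ_{L,1}, v_t(Nrd(f)) ≥ dim_k ker ε̄(f). -/

import Mathlib

private lemma vsum_le {L : Type*} [Field L] (v : L → WithTop ℚ)
    (hv0 : v 0 = ⊤) (hvadd : ∀ a b : L, min (v a) (v b) ≤ v (a + b)) :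
    ∀ {α : Type*} (s : Finset α) (g : α → L) (c : WithTop ℚ),
      (∀ i ∈ s, c ≤ v (g i)) → c ≤ v (∑ i ∈ s, g i) := by
  intro α s
  induction s using Finset.cons_induction with
  | empty => intro g c _; simp only [Finset.sum_empty, hv0]; exact le_top
  | cons a s ha ih =>
    intro g c h
    rw [Finset.sum_cons]
    refine le_trans (le_min (h a (Finset.mem_cons_self a s))
      (ih g c fun i hi => h i (Finset.mem_cons_of_mem hi))) (hvadd _ _)

private lemma vprod_eq {L : Type*} [Field L] (v : L → WithTop ℚ)
    (hv1 : v 1 = 0) (hvmul : ∀ a b : L, v (a * b) = v a + v b) :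
    ∀ {α : Type*} (s : Finset α) (g : α → L),
      v (∏ i ∈ s, g i) = ∑ i ∈ s, v (g i) := by
  intro α s
  induction s using Finset.cons_induction with
  | empty => intro g; simpa using hv1
  | cons a s ha ih =>
    intro g
    rw [Finset.prod_cons, Finset.sum_cons, hvmul, ih]

private lemma wcancel {a b : ℚ} {x : WithTop ℚ} (h : (a : WithTop ℚ) ≤ (b : ℚ) + x) :
    ((a - b : ℚ) : WithTop ℚ) ≤ x := by
  cases x with
  | top => exact le_top
  | coe q =>
    rw [← WithTop.coe_add] at h
    exact WithTop.coe_le_coe.mpr (by linarith [WithTop.coe_le_coe.mp h])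

/-- The matrix `M_f` of right multiplication by `f = a₀ + a₁T + ⋯ + a_{r−1}T^{r−1}`
on `D_{L,x} = L[T;Φ]/(T^r − x)` in the `L`-basis `(1, T, …, T^{r-1})`; its
determinant is the reduced norm `Nrd(f)`. -/
noncomputable def oreMatrix {L : Type*} [CommRing L] (r : ℕ) (Φ : L → L) (x : L)
    (a : Fin r → L) : Matrix (Fin r) (Fin r) L :=
  Matrix.of fun u v =>
    if h : v.val ≤ u.val then
      Φ^[v.val] (a ⟨u.val - v.val, by have := u.isLt; omega⟩)
    else
      x * Φ^[v.val] (a ⟨u.val + r - v.val, by have := u.isLt; have := v.isLt; omega⟩)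

/-- for `f ∈ Λ_{L,1}` (all coefficients of nonnegative valuation),
`v_t(Nrd(f)) ≥ dim_k ker ε̄(f)`, where `ε̄(f)` is the reduction mod `t` of
`ε(f) = Σ (mul aᵢ) ∘ Φⁱ : O_L → O_L`.  The kernel dimension is expressed
through families: for every family `y₁,…,y_n ∈ O_L` whose reductions mod `tO_L`
are `k`-linearly independent and killed by `ε̄(f)` (i.e. `v(ε(f)(yᵢ)) ≥ 1`),
one has `n ≤ v(Nrd(f))`. -/
theorem stmt_11 (k K L : Type*) [Field k] [Field K] [Field L]
    [Algebra k K] [Algebra K L] [Algebra k L] [IsScalarTower k K L]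
    [IsGalois K L]
    (r : ℕ) (hr : 0 < r) (hrk : Module.finrank K L = r)
    (Φ : L ≃ₐ[K] L) (hgen : ∀ σ : L ≃ₐ[K] L, σ ∈ Subgroup.zpowers Φ)
    (v : L → WithTop ℚ)
    (hv0 : ∀ a : L, v a = ⊤ ↔ a = 0)
    (hvmul : ∀ a b : L, v (a * b) = v a + v b)
    (hvadd : ∀ a b : L, min (v a) (v b) ≤ v (a + b))
    (hΦv : ∀ a : L, v (Φ a) = v a)
    -- the valuation is discrete (integer-valued) on `K = k((t))`:
    (hKint : ∀ y : K, y ≠ 0 → ∃ z : ℤ, v (algebraMap K L y) = (z : ℚ))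
    -- `t` is a uniformizer of `K`:
    (t : K) (ht : v (algebraMap K L t) = (1 : ℚ))
    -- the residue field of `K` is `k`:
    (hvk : ∀ c : k, c ≠ 0 → v (algebraMap k L c) = (0 : ℚ))
    (hres : ∀ y : K, 0 ≤ v (algebraMap K L y) →
      ∃ c : k, (1 : ℚ) ≤ v (algebraMap K L y - algebraMap k L c))
    (f : Fin r → L) (hf : ∀ i, 0 ≤ v (f i)) :
    ∀ (n : ℕ) (y : Fin n → L),
      (∀ i, 0 ≤ v (y i)) →
      (∀ c : Fin n → k,
        (1 : ℚ) ≤ v (∑ i, algebraMap k L (c i) * y i) → ∀ i, c i = 0) →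
      (∀ i, (1 : ℚ) ≤ v (∑ j : Fin r, f j * (Φ ^ j.val) (y i))) →
      (n : WithTop ℚ) ≤ v ((oreMatrix r ⇑Φ (1 : L) f).det) := by
  intro n y hy hyind hyker
  haveI : NeZero r := ⟨hr.ne'⟩
  haveI : Nonempty (Fin r) := ⟨⟨0, hr⟩⟩
  haveI : FiniteDimensional K L := FiniteDimensional.of_finrank_pos (hrk ▸ hr)
  -- basic valuation facts
  have hvzero : v 0 = ⊤ := (hv0 0).mpr rfl
  have hv1 : v 1 = 0 := by
    have h := hvmul 1 1
    rw [mul_one] at h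
    have h1 : v 1 ≠ ⊤ := fun h' => one_ne_zero ((hv0 1).mp h')
    lift v (1 : L) to ℚ using h1 with q hq
    rw [← WithTop.coe_add] at h
    have hq' : q = q + q := WithTop.coe_injective h
    have hq0 : q = 0 := by linarith
    rw [hq0]; rfl
  have hvneg : ∀ a : L, v (-a) = v a := by
    have hm1 : v (-1 : L) = 0 := by
      have h := hvmul (-1 : L) (-1)
      rw [neg_mul_neg, one_mul, hv1] at h
      have h1 : v (-1 : L) ≠ ⊤ := fun h' => (by simpa using (hv0 (-1)).mp h' : False)
      lift v (-1 : L) to ℚ using h1 with q hq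
      rw [← WithTop.coe_add] at h
      have hq' : (0 : ℚ) = q + q := WithTop.coe_injective (by exact_mod_cast h)
      have hq0 : q = 0 := by linarith
      rw [hq0]; rfl
    intro a
    rw [show -a = (-1 : L) * a by ring, hvmul, hm1, zero_add]
  have hvsub : ∀ a b : L, min (v a) (v b) ≤ v (a - b) := by
    intro a b
    rw [sub_eq_add_neg]
    refine le_trans (le_min (min_le_left _ _) ?_) (hvadd a (-b))
    rw [hvneg]; exact min_le_right _ _
  -- powers of Φ
  have hpow_iter : ∀ (m : ℕ) (a : L), (Φ ^ m) a = (⇑Φ)^[m] a := by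
    intro m
    induction m with
    | zero => intro a; simp
    | succ m ih =>
      intro a
      rw [pow_succ', AlgEquiv.mul_apply, ih, Function.iterate_succ_apply']
  have hΦpv : ∀ (m : ℕ) (a : L), v ((Φ ^ m) a) = v a := by
    intro m
    induction m with
    | zero => intro a; simp
    | succ m ih =>
      intro a
      rw [pow_succ', AlgEquiv.mul_apply, hΦv, ih]
  have horder : Φ ^ r = 1 := by
    have hc : Fintype.card (L ≃ₐ[K] L) = r := by
      rw [← Nat.card_eq_fintype_card, IsGalois.card_aut_eq_finrank, hrk]
    rw [← hc]; exact pow_card_eq_one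
  have hmod : ∀ s : ℕ, Φ ^ s = Φ ^ (s % r) := by
    intro s
    conv_lhs => rw [← Nat.div_add_mod s r]
    rw [pow_add, pow_mul, horder, one_pow, one_mul]
  -- t facts
  have htn0 : t ≠ 0 := by
    intro h
    rw [h, map_zero, hvzero] at ht
    exact (WithTop.top_ne_coe (α := ℚ)) ht
  have hvt : ∀ m : ℕ, v (algebraMap K L (t ^ m)) = ((m : ℚ) : WithTop ℚ) := by
    intro m
    induction m with
    | zero => rw [pow_zero, map_one, hv1]; norm_num
    | succ m ih =>
      rw [pow_succ, map_mul, hvmul, ih, ht, ← WithTop.coe_add]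
      push_cast
      ring_nf
  -- key residue lemma about y
  have hyK : ∀ c : Fin n → K, (∀ j, 0 ≤ v (algebraMap K L (c j))) →
      ((1:ℚ) : WithTop ℚ) ≤ v (∑ j, algebraMap K L (c j) * y j) →
      ∀ j, ((1:ℚ) : WithTop ℚ) ≤ v (algebraMap K L (c j)) := by
    intro c hc hsum
    choose γ hγ using fun j => hres (c j) (hc j)
    have h1 : ((1:ℚ) : WithTop ℚ) ≤ v (∑ j, algebraMap k L (γ j) * y j) := by
      have heq : ∑ j, algebraMap k L (γ j) * y j
          = (∑ j, algebraMap K L (c j) * y j)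
            - ∑ j, (algebraMap K L (c j) - algebraMap k L (γ j)) * y j := by
        rw [← Finset.sum_sub_distrib]
        exact Finset.sum_congr rfl fun j _ => by ring
      rw [heq]
      refine le_trans (le_min hsum ?_) (hvsub _ _)
      refine vsum_le v hvzero hvadd _ _ _ fun j _ => ?_
      rw [hvmul]
      calc ((1:ℚ) : WithTop ℚ) = ((1:ℚ) : WithTop ℚ) + 0 := by rw [add_zero]
        _ ≤ _ := add_le_add (hγ j) (hy j)
    have hγ0 := hyind γ h1
    intro j
    have h2 := hγ j
    rw [hγ0 j, map_zero, sub_zero] at h2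
    exact h2
  -- y is K-linearly independent
  have hstart : ∀ (m : ℕ) (c : Fin m → K), ∃ d₀ : ℕ,
      ∀ j, (((-(d₀ : ℚ)) : ℚ) : WithTop ℚ) ≤ v (algebraMap K L (c j)) := by
    classical
    intro m c
    set w : Fin m → ℕ := fun j => if h : c j = 0 then 0
      else (Classical.choose (hKint (c j) h)).natAbs with hw
    refine ⟨∑ j, w j, fun j => ?_⟩
    by_cases h : c j = 0
    · rw [h, map_zero, hvzero]; exact le_top
    · have hz := Classical.choose_spec (hKint (c j) h)
      rw [hz, WithTop.coe_le_coe]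
      have h1 : w j ≤ ∑ j', w j' :=
        Finset.single_le_sum (fun _ _ => Nat.zero_le _) (Finset.mem_univ j)
      have h2 : w j = (Classical.choose (hKint (c j) h)).natAbs := by
        rw [hw]; simp [h]
      set z := Classical.choose (hKint (c j) h) with hzdef
      have h3 : -((∑ j', w j' : ℕ) : ℤ) ≤ z := by
        have h4 := neg_abs_le z
        have h5 : z.natAbs ≤ (∑ j', w j' : ℕ) := h2 ▸ h1
        omega
      exact_mod_cast h3
  have hyli : LinearIndependent K y := by
    rw [Fintype.linearIndependent_iff]
    intro gg hgg
    have hsum0 : ∑ j, algebraMap K L (gg j) * y j = 0 := by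
      simpa [Algebra.smul_def] using hgg
    obtain ⟨d₀, hd₀⟩ := hstart n gg
    have claim : ∀ m : ℕ, ∀ j,
        (((m : ℚ) - (d₀ : ℚ) : ℚ) : WithTop ℚ) ≤ v (algebraMap K L (gg j)) := by
      intro m
      induction m with
      | zero => intro j; simpa using hd₀ j
      | succ m ih =>
        set c : Fin n → K := fun j => t ^ d₀ / t ^ m * gg j with hcdef
        have hkey : ∀ j', v (algebraMap K L (c j')) + ((m:ℚ) : WithTop ℚ)
            = ((d₀:ℚ) : WithTop ℚ) + v (algebraMap K L (gg j')) := by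
          intro j'
          have hcm : c j' * t ^ m = t ^ d₀ * gg j' := by
            rw [hcdef]
            field_simp
          calc v (algebraMap K L (c j')) + ((m:ℚ) : WithTop ℚ)
              = v (algebraMap K L (c j' * t ^ m)) := by
                conv_rhs => rw [map_mul, hvmul, hvt]
            _ = v (algebraMap K L (t ^ d₀ * gg j')) := by rw [hcm]
            _ = _ := by rw [map_mul, hvmul, hvt]
        have hc0 : ∀ j', 0 ≤ v (algebraMap K L (c j')) := by
          intro j'
          have h1 : (0 : WithTop ℚ) + ((m:ℚ) : WithTop ℚ)
              ≤ v (algebraMap K L (c j')) + ((m:ℚ) : WithTop ℚ) := by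
            rw [hkey j', zero_add]
            calc ((m:ℚ) : WithTop ℚ) = (((d₀:ℚ) + ((m:ℚ) - (d₀:ℚ)) : ℚ) : WithTop ℚ) := by norm_num
              _ = ((d₀:ℚ) : WithTop ℚ) + (((m:ℚ) - (d₀:ℚ) : ℚ) : WithTop ℚ) := WithTop.coe_add _ _
              _ ≤ _ := add_le_add_right (ih j') _
          exact (WithTop.add_le_add_iff_right WithTop.coe_ne_top).mp h1
        have hcsum : ∑ j', algebraMap K L (c j') * y j' = 0 := by
          have : ∑ j', algebraMap K L (c j') * y j'
              = algebraMap K L (t ^ d₀ / t ^ m) * ∑ j', algebraMap K L (gg j') * y j' := by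
            rw [Finset.mul_sum]
            exact Finset.sum_congr rfl fun j' _ => by rw [hcdef, map_mul, mul_assoc]
          rw [this, hsum0, mul_zero]
        have hc1 := hyK c hc0 (by rw [hcsum, hvzero]; exact le_top)
        intro j
        have h2 : ((1:ℚ) : WithTop ℚ) + ((m:ℚ) : WithTop ℚ)
            ≤ ((d₀:ℚ) : WithTop ℚ) + v (algebraMap K L (gg j)) := by
          rw [← hkey j]
          exact add_le_add_left (hc1 j) _
        rw [← WithTop.coe_add] at h2
        cases hvq : v (algebraMap K L (gg j)) with
        | top => exact le_top
        | coe q =>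
          rw [hvq, ← WithTop.coe_add, WithTop.coe_le_coe] at h2
          rw [WithTop.coe_le_coe]
          push_cast at h2 ⊢
          linarith
    intro j
    by_contra hne
    obtain ⟨z, hz⟩ := hKint (gg j) hne
    have := claim (d₀ + z.natAbs + 1) j
    rw [hz, WithTop.coe_le_coe] at this
    have h4 := neg_abs_le (-z)
    push_cast at this
    have : ((d₀:ℚ) + z.natAbs + 1) - d₀ ≤ z := this
    have hz2 : (z:ℚ) ≤ z.natAbs := by
      rw [Nat.cast_natAbs]
      exact_mod_cast le_abs_self z
    linarith
  have hn : n ≤ r := by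
    simpa [hrk] using hyli.fintype_card_le_finrank
  -- the Galois matrix
  set W : (Fin r → L) → Matrix (Fin r) (Fin r) L :=
    fun g => Matrix.of fun i j => (Φ ^ (i : ℕ)) (g j) with hWdef
  have hdetge : ∀ (M : Matrix (Fin r) (Fin r) L) (c : Fin r → WithTop ℚ),
      (∀ i j, c j ≤ v (M i j)) → (∑ j, c j) ≤ v M.det := by
    intro M c hc
    rw [Matrix.det_apply]
    refine vsum_le v hvzero hvadd _ _ _ fun σ _ => ?_
    have hsgn : v (Equiv.Perm.sign σ • ∏ i, M (σ i) i) = v (∏ i, M (σ i) i) := by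
      rcases Int.units_eq_one_or (Equiv.Perm.sign σ) with h | h
      · rw [h, one_smul]
      · rw [h, Units.smul_def, Units.val_neg, Units.val_one, neg_zsmul, one_zsmul, hvneg]
    rw [hsgn, vprod_eq v hv1 hvmul]
    exact Finset.sum_le_sum fun i _ => hc (σ i) i
  have hord : orderOf Φ = r := by
    have h1 : Subgroup.zpowers Φ = ⊤ := (Subgroup.eq_top_iff' _).mpr hgen
    have h2 : Fintype.card (L ≃ₐ[K] L) = r := by rw [← Nat.card_eq_fintype_card, IsGalois.card_aut_eq_finrank, hrk]
    have h3 : Fintype.card ↥(Subgroup.zpowers Φ) = Fintype.card (L ≃ₐ[K] L) :=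
      Fintype.card_congr (Equiv.subtypeUnivEquiv hgen)
    rw [← Fintype.card_zpowers, h3, h2]
  have hW : ∀ g : Fin r → L, LinearIndependent K g → (W g).det ≠ 0 := by
    intro g hgli hdet0
    obtain ⟨d, hd0, hd⟩ := Matrix.exists_vecMul_eq_zero_iff.mpr hdet0
    set bg : Module.Basis (Fin r) K L := basisOfLinearIndependentOfCardEqFinrank hgli
      (by rw [Fintype.card_fin, hrk]) with hbgdef
    have hbg : ∀ j, bg j = g j := fun j =>
      congrFun (coe_basisOfLinearIndependentOfCardEqFinrank _ _) j
    have hfun : ∀ x : L, ∑ i : Fin r, d i * (Φ ^ (i:ℕ)) x = 0 := by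
      intro x
      have hx : x = ∑ j, algebraMap K L (bg.repr x j) * g j := by
        conv_lhs => rw [← bg.sum_repr x]
        exact Finset.sum_congr rfl fun j _ => by rw [Algebra.smul_def, hbg]
      rw [hx]
      have hpush : ∀ i : Fin r,
          d i * (Φ ^ (i:ℕ)) (∑ j, algebraMap K L (bg.repr x j) * g j)
          = ∑ j, algebraMap K L (bg.repr x j) * (d i * (Φ ^ (i:ℕ)) (g j)) := by
        intro i
        rw [map_sum, Finset.mul_sum]
        exact Finset.sum_congr rfl fun j _ => by
          rw [map_mul, AlgEquiv.commutes]; ring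
      rw [Finset.sum_congr rfl fun i _ => hpush i, Finset.sum_comm]
      refine Finset.sum_eq_zero fun j _ => ?_
      rw [← Finset.mul_sum]
      have hcol : ∑ i, d i * (Φ ^ (i:ℕ)) (g j) = 0 := by
        have hj := congrFun hd j
        simpa [Matrix.vecMul, dotProduct, hWdef] using hj
      rw [hcol, mul_zero]
    have hinj : Function.Injective
        (fun i : Fin r => ((Φ ^ (i:ℕ)).toAlgHom.toRingHom.toMonoidHom : L →* L)) := by
      intro i j hij
      have hfe : (Φ ^ (i:ℕ) : L ≃ₐ[K] L) = Φ ^ (j:ℕ) := by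
        apply AlgEquiv.ext
        intro x
        exact congrArg (fun (h : L →* L) => h x) hij
      have hij' := pow_injOn_Iio_orderOf (x := Φ)
        (by rw [hord]; exact i.isLt) (by rw [hord]; exact j.isLt) hfe
      exact Fin.ext hij'
    have hchar := (linearIndependent_monoidHom L L).comp _ hinj
    have hzero : (∑ i : Fin r, d i •
        (⇑((Φ ^ (i:ℕ)).toAlgHom.toRingHom.toMonoidHom : L →* L) : L → L)) = 0 := by
      funext x
      simp only [Finset.sum_apply, Pi.smul_apply, smul_eq_mul, Pi.zero_apply]
      exact hfun x
    have hdz := Fintype.linearIndependent_iff.mp hchar d hzero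
    exact hd0 (funext hdz)
  have hWconv : ∀ g : Fin r → L, (W g).det ≠ 0 → LinearIndependent K g := by
    intro g hdet
    rw [Fintype.linearIndependent_iff]
    intro a ha
    have hrow : (W g).mulVec (fun j => algebraMap K L (a j)) = 0 := by
      funext i
      simp only [Matrix.mulVec, dotProduct, Pi.zero_apply]
      have hline : ∑ j, W g i j * algebraMap K L (a j) = (Φ ^ (i:ℕ)) (∑ j, a j • g j) := by
        rw [map_sum]
        exact Finset.sum_congr rfl fun j _ => by
          rw [Algebra.smul_def, map_mul, AlgEquiv.commutes, hWdef, mul_comm]; rfl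
      rw [hline, ha, map_zero]
    by_cases hvz : (fun j => algebraMap K L (a j)) = 0
    · intro i
      have := congrFun hvz i
      exact (algebraMap K L).injective (by simpa using this)
    · exact absurd (Matrix.exists_mulVec_eq_zero_iff.mp ⟨_, hvz, hrow⟩) hdet
  -- extend y to a K-linearly independent family of size r with nonneg valuations
  have hext : ∃ g : Fin r → L, LinearIndependent K g ∧
      (∀ i : Fin n, g (Fin.castLE hn i) = y i) ∧ (∀ j, 0 ≤ v (g j)) := by
    have hstep : ∀ d : ℕ, n + d ≤ r → ∃ g : Fin (n + d) → L,
        LinearIndependent K g ∧ ∀ i : Fin n, g (Fin.castAdd d i) = y i := by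
      intro d
      induction d with
      | zero =>
        intro _
        exact ⟨y, hyli, fun i => by congr 1⟩
      | succ d ih =>
        intro hle
        obtain ⟨g, hgli, hgy⟩ := ih (by omega)
        have hne : Submodule.span K (Set.range g) ≠ ⊤ := by
          intro hsp
          have hbas : Module.Basis (Fin (n+d)) K L := Module.Basis.mk hgli (le_of_eq hsp.symm)
          have hcard := Module.finrank_eq_card_basis hbas
          rw [hrk, Fintype.card_fin] at hcard
          omega
        obtain ⟨z, hz⟩ : ∃ z : L, z ∉ Submodule.span K (Set.range g) := by
          by_contra hc; push_neg at hc
          exact hne (top_unique fun x _ => hc x)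
        refine ⟨Fin.snoc g z, linearIndependent_fin_snoc.mpr ⟨hgli, hz⟩, fun i => ?_⟩
        have hcast : (Fin.castAdd (d+1) i) = Fin.castSucc (Fin.castAdd d i) := Fin.ext rfl
        rw [hcast, Fin.snoc_castSucc]
        exact hgy i
    obtain ⟨g0, hg0li, hg0y⟩ := hstep (r - n) (by omega)
    set e : Fin r → Fin (n + (r - n)) := fun j => Fin.cast (by omega) j with hedef
    set g1 : Fin r → L := fun j => g0 (e j) with hg1def
    have hg1li : LinearIndependent K g1 := hg0li.comp e (fun a b hab => by
      have hv' : (e a).val = (e b).val := congrArg Fin.val hab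
      exact Fin.ext hv')
    have hg1y : ∀ i : Fin n, g1 (Fin.castLE hn i) = y i := by
      intro i
      have hcast : e (Fin.castLE hn i) = Fin.castAdd (r - n) i := Fin.ext rfl
      rw [hg1def]
      dsimp only
      rw [hcast]
      exact hg0y i
    have hNex : ∀ j : Fin r, ∃ N : ℕ, 0 ≤ v (algebraMap K L (t ^ N) * g1 j) := by
      intro j
      have hgne : g1 j ≠ 0 := hg1li.ne_zero j
      obtain ⟨q, hq⟩ : ∃ q : ℚ, v (g1 j) = (q : WithTop ℚ) := by
        cases hvq : v (g1 j) with
        | top => exact absurd ((hv0 _).mp hvq) hgne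
        | coe q => exact ⟨q, rfl⟩
      refine ⟨(⌈-q⌉).toNat, ?_⟩
      rw [hvmul, hvt, hq, ← WithTop.coe_add,
        show (0 : WithTop ℚ) = ((0:ℚ) : WithTop ℚ) from rfl, WithTop.coe_le_coe]
      have h1 : (-q : ℚ) ≤ (⌈-q⌉ : ℚ) := Int.le_ceil _
      have h2 : ((⌈-q⌉ : ℤ) : ℚ) ≤ (((⌈-q⌉).toNat : ℤ) : ℚ) := by
        exact_mod_cast Int.self_le_toNat _
      push_cast at h2 ⊢
      linarith
    choose N hN using hNex
    classical
    set s : Fin r → K := fun j => if j.val < n then 1 else t ^ (N j) with hsdef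
    have hs0 : ∀ j, s j ≠ 0 := by
      intro j; rw [hsdef]; dsimp only; split
      · exact one_ne_zero
      · exact pow_ne_zero _ htn0
    set g2 : Fin r → L := fun j => algebraMap K L (s j) * g1 j with hg2def
    have hg2li : LinearIndependent K g2 := by
      have hsm := hg1li.units_smul (fun j => Units.mk0 (s j) (hs0 j))
      have hfe : ((fun j => Units.mk0 (s j) (hs0 j)) • g1) = g2 := by
        funext j
        rw [hg2def]
        dsimp only [Pi.smul_apply']
        rw [Units.smul_def, Algebra.smul_def]
        rfl
      rwa [hfe] at hsm
    refine ⟨g2, hg2li, fun i => ?_, fun j => ?_⟩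
    · rw [hg2def]; dsimp only
      rw [hsdef]; dsimp only
      rw [if_pos (by exact i.isLt : (Fin.castLE hn i).val < n), map_one, one_mul]
      exact hg1y i
    · rw [hg2def]; dsimp only
      rw [hsdef]; dsimp only
      split
      · rename_i hjn
        rw [map_one, one_mul]
        have hj : Fin.castLE hn ⟨j.val, hjn⟩ = j := Fin.ext rfl
        have hgy1 : g1 j = y ⟨j.val, hjn⟩ := by
          have h6 := hg1y ⟨j.val, hjn⟩
          rwa [hj] at h6
        have hy1 := hy ⟨j.val, hjn⟩
        rwa [← hgy1] at hy1
      · exact hN j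
  obtain ⟨g₂, hg₂li, hg₂y, hg₂v⟩ := hext
  -- minimization
  have hWpos : ∀ g : Fin r → L, (∀ j, 0 ≤ v (g j)) → 0 ≤ v ((W g).det) := by
    intro g hg
    have h := hdetge (W g) (fun _ => 0) (fun i j => by
      rw [hWdef]
      show 0 ≤ v ((Φ ^ (i:ℕ)) (g j)); rw [hΦpv]; exact hg j)
    simpa using h
  set v₀ : WithTop ℚ := v ((W g₂).det) with hv₀def
  obtain ⟨q₀, hq₀⟩ : ∃ q₀ : ℚ, v₀ = (q₀ : ℚ) := by
    have hne : (W g₂).det ≠ 0 := hW g₂ hg₂li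
    cases hvq : v ((W g₂).det) with
    | top => exact absurd ((hv0 _).mp hvq) hne
    | coe q => exact ⟨q, by rw [hv₀def, hvq]⟩
  classical
  set P : ℕ → Prop := fun m => ∃ g : Fin r → L, LinearIndependent K g ∧
      (∀ i : Fin n, g (Fin.castLE hn i) = y i) ∧ (∀ j, 0 ≤ v (g j)) ∧
      v ((W g).det) + ((m : ℚ) : WithTop ℚ) ≤ v₀ with hPdef
  have hP0 : P 0 := by
    refine ⟨g₂, hg₂li, hg₂y, hg₂v, ?_⟩
    rw [hv₀def]
    simp
  have hPbd : ∀ m, P m → m ≤ ⌈q₀⌉.toNat := by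
    intro m hPm
    obtain ⟨g, hgli, hgy, hgv, hμ⟩ := hPm
    have h0 := hWpos g hgv
    have h1 : ((m:ℚ) : WithTop ℚ) ≤ v₀ := by
      calc ((m:ℚ) : WithTop ℚ) = 0 + ((m:ℚ) : WithTop ℚ) := (zero_add _).symm
        _ ≤ v ((W g).det) + ((m:ℚ) : WithTop ℚ) := add_le_add_left h0 _
        _ ≤ v₀ := hμ
    rw [hq₀, WithTop.coe_le_coe] at h1
    have h2 : ((m:ℤ):ℚ) ≤ (⌈q₀⌉:ℚ) := by
      have := Int.le_ceil q₀
      push_cast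
      linarith
    have h3 : (m:ℤ) ≤ ⌈q₀⌉ := by exact_mod_cast h2
    omega
  set m₀ : ℕ := Nat.findGreatest P ⌈q₀⌉.toNat with hm₀def
  have hPm₀ : P m₀ := Nat.findGreatest_spec (Nat.zero_le _) hP0
  have hnot : ¬ P (m₀ + 1) := by
    intro hP
    exact Nat.findGreatest_is_greatest (hm₀def ▸ Nat.lt_succ_self m₀) (hPbd _ hP) hP
  obtain ⟨g, hgli, hgy, hgv, hgμ⟩ := hPm₀
  have hdetg : (W g).det ≠ 0 := hW g hgli
  set b : Module.Basis (Fin r) K L := basisOfLinearIndependentOfCardEqFinrank hgli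
    (by simpa [hrk] using rfl) with hbdef
  have hb : ∀ j, b j = g j := by
    intro j
    rw [hbdef]
    exact congrFun (coe_basisOfLinearIndependentOfCardEqFinrank _ _) j
  -- the key coordinate property of the minimizing family
  have hiii : ∀ z : L, 0 ≤ v z → ∀ i, 0 ≤ v (algebraMap K L (b.repr z i)) := by
    intro z hz
    set c : Fin r → K := fun i => b.repr z i with hcdef
    have hzrepr : z = ∑ j, algebraMap K L (c j) * g j := by
      conv_lhs => rw [← b.sum_repr z]
      refine Finset.sum_congr rfl fun j _ => ?_
      rw [Algebra.smul_def, hb]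
    obtain ⟨d₀, hd₀⟩ := hstart r c
    suffices hcl : ∀ d : ℕ, (∀ j, (((-(d : ℚ)) : ℚ) : WithTop ℚ) ≤ v (algebraMap K L (c j))) →
        ∀ j, 0 ≤ v (algebraMap K L (c j)) by
      exact hcl d₀ hd₀
    intro d
    induction d with
    | zero => intro h j; simpa using h j
    | succ d ih =>
      intro hbd
      set D : ℚ := ((d + 1 : ℕ) : ℚ) with hDdef
      set c' : Fin r → K := fun j => t ^ (d+1) * c j with hc'def
      have hc'v : ∀ j, v (algebraMap K L (c' j))
          = (D : WithTop ℚ) + v (algebraMap K L (c j)) := by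
        intro j
        rw [hc'def]
        dsimp only
        rw [map_mul, hvmul, hvt]
      have hc'0 : ∀ j, 0 ≤ v (algebraMap K L (c' j)) := by
        intro j
        rw [hc'v j]
        calc (0 : WithTop ℚ) = ((D + (-D) : ℚ) : WithTop ℚ) := by norm_num
          _ = (D : WithTop ℚ) + (((-D) : ℚ) : WithTop ℚ) := WithTop.coe_add _ _
          _ ≤ _ := by
              refine add_le_add_right ?_ _
              have h1 := hbd j
              refine le_trans (le_of_eq ?_) h1
              rw [WithTop.coe_inj, hDdef]
      have hz' : ((1:ℚ) : WithTop ℚ) ≤ v (∑ j, algebraMap K L (c' j) * g j) := by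
        have heq : ∑ j, algebraMap K L (c' j) * g j = algebraMap K L (t^(d+1)) * z := by
          rw [hzrepr, Finset.mul_sum]
          refine Finset.sum_congr rfl fun j _ => ?_
          rw [hc'def]
          dsimp only
          rw [map_mul, mul_assoc]
        rw [heq, hvmul, hvt]
        calc ((1:ℚ) : WithTop ℚ) ≤ (D : WithTop ℚ) := by
              rw [WithTop.coe_le_coe, hDdef]; push_cast; linarith
          _ = (D : WithTop ℚ) + 0 := (add_zero _).symm
          _ ≤ _ := add_le_add_right hz _
      choose γ hγ using fun j => hres (c' j) (hc'0 j)
      have hγ1 : ((1:ℚ) : WithTop ℚ) ≤ v (∑ j, algebraMap k L (γ j) * g j) := by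
        have heq : ∑ j, algebraMap k L (γ j) * g j
            = (∑ j, algebraMap K L (c' j) * g j)
              - ∑ j, (algebraMap K L (c' j) - algebraMap k L (γ j)) * g j := by
          rw [← Finset.sum_sub_distrib]
          exact Finset.sum_congr rfl fun j _ => by ring
        rw [heq]
        refine le_trans (le_min hz' ?_) (hvsub _ _)
        refine vsum_le v hvzero hvadd _ _ _ fun j _ => ?_
        rw [hvmul]
        calc ((1:ℚ) : WithTop ℚ) = ((1:ℚ) : WithTop ℚ) + 0 := (add_zero _).symm
          _ ≤ _ := add_le_add (hγ j) (hgv j)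
      by_cases hA : ∀ j : Fin r, n ≤ j.val → γ j = 0
      · have hresty : ∑ i : Fin n, algebraMap k L (γ (Fin.castLE hn i)) * y i
            = ∑ j, algebraMap k L (γ j) * g j := by
          rw [← Finset.sum_subset (Finset.subset_univ ((Finset.univ : Finset (Fin n)).map
            ⟨Fin.castLE hn, Fin.castLE_injective hn⟩)) ?_]
          · rw [Finset.sum_map]
            refine Finset.sum_congr rfl fun i _ => ?_
            have : ((⟨Fin.castLE hn, Fin.castLE_injective hn⟩ : Fin n ↪ Fin r) i)
                = Fin.castLE hn i := rfl
            rw [this, hgy i]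
          · intro j _ hj
            have hjn : n ≤ j.val := by
              by_contra hlt
              push_neg at hlt
              exact hj (Finset.mem_map.mpr ⟨⟨j.val, hlt⟩, Finset.mem_univ _, Fin.ext rfl⟩)
            rw [hA j hjn, map_zero, zero_mul]
        have hγ0 : ∀ j, γ j = 0 := by
          have h0 := hyind (fun i => γ (Fin.castLE hn i)) (by rw [hresty]; exact hγ1)
          intro j
          by_cases hj : j.val < n
          · have h1 : γ (Fin.castLE hn ⟨j.val, hj⟩) = 0 := h0 ⟨j.val, hj⟩
            have h2 : Fin.castLE hn ⟨j.val, hj⟩ = j := Fin.ext rfl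
            rwa [h2] at h1
          · exact hA j (le_of_not_gt hj)
        refine ih fun j => ?_
        have h3 := hγ j
        rw [hγ0 j, map_zero, sub_zero, hc'v j] at h3
        have h4 := wcancel h3
        rw [show ((-(d:ℚ)) : ℚ) = ((1:ℚ) - D : ℚ) by rw [hDdef]; push_cast; ring]
        exact h4
      · push_neg at hA
        obtain ⟨j₀, hj₀n, hγ₀⟩ := hA
        exfalso
        apply hnot
        have hne1 : ¬ (((1:ℚ) : WithTop ℚ) ≤ v (algebraMap K L (c' j₀))) := by
          intro hge
          have h5 : ((1:ℚ) : WithTop ℚ) ≤ v (algebraMap k L (γ j₀)) := by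
            have heq : algebraMap k L (γ j₀)
                = algebraMap K L (c' j₀) - (algebraMap K L (c' j₀) - algebraMap k L (γ j₀)) := by
              ring
            rw [heq]
            exact le_trans (le_min hge (hγ j₀)) (hvsub _ _)
          rw [hvk (γ j₀) hγ₀, WithTop.coe_le_coe] at h5
          linarith
        have hc'ne : c' j₀ ≠ 0 := by
          intro h0
          apply hne1
          rw [h0, map_zero, hvzero]
          exact le_top
        obtain ⟨zi, hzi⟩ := hKint (c' j₀) hc'ne
        have hz0 : v (algebraMap K L (c' j₀)) = ((0:ℚ) : WithTop ℚ) := by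
          rw [hzi]
          have h6 := hc'0 j₀
          rw [hzi, show (0:WithTop ℚ) = ((0:ℚ):WithTop ℚ) from rfl, WithTop.coe_le_coe] at h6
          have h7 : ¬ ((1:ℚ) ≤ (zi:ℚ)) := fun hc => hne1 (by rw [hzi, WithTop.coe_le_coe]; exact hc)
          have h8 : zi = 0 := by
            have h9 : (0:ℤ) ≤ zi := by exact_mod_cast h6
            have h10 : ¬ ((1:ℤ) ≤ zi) := fun hc => h7 (by exact_mod_cast hc)
            omega
          rw [h8]
          norm_num
        have hvm1 : v (algebraMap K L (t ^ d * c j₀)) = ((-1:ℚ) : WithTop ℚ) := by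
          have heq : c' j₀ = t * (t ^ d * c j₀) := by rw [hc'def]; dsimp only; ring
          have h9 := hz0
          rw [heq, map_mul, hvmul, ht] at h9
          cases hvq : v (algebraMap K L (t ^ d * c j₀)) with
          | top => rw [hvq, add_top] at h9; exact absurd h9 WithTop.top_ne_coe
          | coe q =>
            rw [hvq, ← WithTop.coe_add] at h9
            have h10 := WithTop.coe_injective h9
            rw [WithTop.coe_inj]
            linarith
        set z'' : L := algebraMap K L (t ^ d) * z with hz''def
        have hz''repr : z'' = ∑ m, algebraMap K L (t ^ d * c m) * g m := by
          rw [hz''def, hzrepr, Finset.mul_sum]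
          refine Finset.sum_congr rfl fun m _ => ?_
          rw [map_mul, mul_assoc]
        set g' : Fin r → L := Function.update g j₀ z'' with hg'def
        have hWg' : W g' = (W g).updateCol j₀
            (fun i => ∑ m, (algebraMap K L (t ^ d * c m)) • (W g) i m) := by
          ext i j
          rw [Matrix.updateCol_apply]
          by_cases hj : j = j₀
          · rw [if_pos hj]
            show (Φ ^ (i:ℕ)) (g' j) = _
            rw [hj, hg'def, Function.update_self, hz''repr, map_sum]
            refine Finset.sum_congr rfl fun m _ => ?_
            rw [map_mul, AlgEquiv.commutes, smul_eq_mul]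
            rfl
          · rw [if_neg hj]
            show (Φ ^ (i:ℕ)) (g' j) = (Φ ^ (i:ℕ)) (g j)
            rw [hg'def, Function.update_of_ne hj]
        have hdet' : (W g').det = algebraMap K L (t ^ d * c j₀) * (W g).det := by
          rw [hWg', Matrix.det_updateCol_sum, smul_eq_mul]
        have hιne : algebraMap K L (t ^ d * c j₀) ≠ 0 := by
          intro h0
          rw [h0, hvzero] at hvm1
          exact absurd hvm1 WithTop.top_ne_coe
        refine ⟨g', hWconv g' ?_, fun i => ?_, fun j => ?_, ?_⟩
        · rw [hdet']
          exact mul_ne_zero hιne hdetg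
        · rw [hg'def, Function.update_of_ne ?_]
          · exact hgy i
          · intro he
            have := congrArg Fin.val he
            simp only [Fin.coe_castLE] at this
            omega
        · by_cases hj : j = j₀
          · rw [hg'def, hj, Function.update_self, hz''def, hvmul, hvt]
            calc (0 : WithTop ℚ) = 0 + 0 := (add_zero _).symm
              _ ≤ _ := add_le_add (by rw [show (0:WithTop ℚ) = ((0:ℚ):WithTop ℚ) from rfl,
                  WithTop.coe_le_coe]; positivity) hz
          · rw [hg'def, Function.update_of_ne hj]
            exact hgv j
        · rw [hdet', hvmul, hvm1]
          have heq2 : (((-1:ℚ)) : WithTop ℚ) + v ((W g).det) + (((m₀+1 : ℕ):ℚ) : WithTop ℚ)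
              = v ((W g).det) + (((m₀ : ℕ):ℚ) : WithTop ℚ) := by
            rw [add_comm (((-1:ℚ)) : WithTop ℚ) (v ((W g).det)), add_assoc, ← WithTop.coe_add]
            congr 1
            rw [WithTop.coe_inj]
            push_cast
            ring
          rw [heq2]
          exact hgμ
  have hiii1 : ∀ z : L, ((1:ℚ) : WithTop ℚ) ≤ v z →
      ∀ i, ((1:ℚ) : WithTop ℚ) ≤ v (algebraMap K L (b.repr z i)) := by
    intro z hz1 i
    have htL : algebraMap K L t ≠ 0 := fun h => by
      rw [h, hvzero] at ht; exact WithTop.top_ne_coe ht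
    set w : L := (algebraMap K L t)⁻¹ * z with hwdef
    have hzw : z = algebraMap K L t * w := by
      rw [hwdef, ← mul_assoc, mul_inv_cancel₀ htL, one_mul]
    have hvw : 0 ≤ v w := by
      have hvz : v z = ((1:ℚ):WithTop ℚ) + v w := by
        conv_lhs => rw [hzw, hvmul, ht]
      have h2 : ((1:ℚ):WithTop ℚ) + 0 ≤ ((1:ℚ):WithTop ℚ) + v w := by
        rw [add_zero, ← hvz]
        exact hz1
      exact (WithTop.add_le_add_iff_left WithTop.coe_ne_top).mp h2
    have hrepr : b.repr z i = t * b.repr w i := by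
      rw [hzw, ← Algebra.smul_def, map_smul, Finsupp.smul_apply, smul_eq_mul]
    rw [hrepr, map_mul, hvmul, ht]
    calc ((1:ℚ):WithTop ℚ) = ((1:ℚ):WithTop ℚ) + 0 := (add_zero _).symm
      _ ≤ _ := add_le_add_right (hiii w hvw i) _
  -- epsilon(f)
  set F : L → L := fun z => ∑ j : Fin r, f j * (Φ ^ (j : ℕ)) z with hFdef
  have hFv : ∀ z : L, 0 ≤ v z → 0 ≤ v (F z) := by
    intro z hz
    show (0 : WithTop ℚ) ≤ v (∑ j : Fin r, f j * (Φ ^ (j:ℕ)) z)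
    refine vsum_le v hvzero hvadd _ _ _ fun j _ => ?_
    rw [hvmul, hΦpv]
    calc (0:WithTop ℚ) = 0 + 0 := (add_zero _).symm
      _ ≤ _ := add_le_add (hf j) hz
  set B : Matrix (Fin r) (Fin r) L :=
    Matrix.of fun i j => algebraMap K L (b.repr (F (g j)) i) with hBdef
  have hB0 : ∀ i j, 0 ≤ v (B i j) := by
    intro i j
    show 0 ≤ v (algebraMap K L (b.repr (F (g j)) i))
    exact hiii (F (g j)) (hFv _ (hgv j)) i
  have hB1 : ∀ i j, j.val < n → ((1:ℚ) : WithTop ℚ) ≤ v (B i j) := by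
    intro i j hjn
    show ((1:ℚ) : WithTop ℚ) ≤ v (algebraMap K L (b.repr (F (g j)) i))
    have hgyj : g j = y ⟨j.val, hjn⟩ := by
      have h6 := hgy ⟨j.val, hjn⟩
      have h2 : Fin.castLE hn ⟨j.val, hjn⟩ = j := Fin.ext rfl
      rwa [h2] at h6
    refine hiii1 (F (g j)) ?_ i
    rw [hgyj]
    show ((1:ℚ) : WithTop ℚ) ≤ v (∑ l : Fin r, f l * (Φ ^ (l:ℕ)) (y ⟨j.val, hjn⟩))
    exact hyker ⟨j.val, hjn⟩
  set A : Matrix (Fin r) (Fin r) L :=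
    Matrix.of fun i m => (Φ ^ (i : ℕ)) (f (m - i)) with hAdef
  have hAW : A * W g = W g * B := by
    ext i j
    rw [Matrix.mul_apply, Matrix.mul_apply]
    have hrhs : ∑ m, W g i m * B m j = (Φ ^ (i:ℕ)) (F (g j)) := by
      have hFrepr : F (g j) = ∑ m, algebraMap K L (b.repr (F (g j)) m) * g m := by
        conv_lhs => rw [← b.sum_repr (F (g j))]
        refine Finset.sum_congr rfl fun m _ => ?_
        rw [Algebra.smul_def, hb]
      conv_rhs => rw [hFrepr, map_sum]
      refine Finset.sum_congr rfl fun m _ => ?_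
      rw [map_mul, AlgEquiv.commutes]
      show (Φ ^ (i:ℕ)) (g m) * algebraMap K L (b.repr (F (g j)) m) = _
      ring
    have hlhs : ∑ m, A i m * W g m j = (Φ ^ (i:ℕ)) (F (g j)) := by
      have hF2 : (Φ ^ (i:ℕ)) (F (g j))
          = ∑ l : Fin r, (Φ ^ (i:ℕ)) (f l) * (Φ ^ (((i + l : Fin r) : Fin r) : ℕ)) (g j) := by
        show (Φ ^ (i:ℕ)) (∑ l : Fin r, f l * (Φ ^ (l:ℕ)) (g j)) = _
        rw [map_sum]
        refine Finset.sum_congr rfl fun l _ => ?_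
        rw [map_mul]
        congr 1
        rw [← AlgEquiv.mul_apply, ← pow_add, hmod ((i:ℕ) + (l:ℕ)), Fin.val_add]
      rw [hF2]
      refine (Fintype.sum_equiv (Equiv.addLeft i) _ _ fun l => ?_).symm
      show (Φ ^ (i:ℕ)) (f l) * (Φ ^ (((i + l : Fin r) : Fin r) : ℕ)) (g j)
          = A i (Equiv.addLeft i l) * W g (Equiv.addLeft i l) j
      have hal : Equiv.addLeft i l = i + l := rfl
      rw [hal]
      show (Φ ^ (i:ℕ)) (f l) * (Φ ^ (((i + l : Fin r) : Fin r) : ℕ)) (g j)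
          = (Φ ^ (i : ℕ)) (f (i + l - i)) * (Φ ^ (((i + l : Fin r) : Fin r) : ℕ)) (g j)
      rw [add_sub_cancel_left]
    rw [hlhs, hrhs]
  have hore : oreMatrix r ⇑Φ (1 : L) f = A.transpose := by
    ext u w
    rw [Matrix.transpose_apply]
    show (oreMatrix r ⇑Φ (1 : L) f) u w = A w u
    have hA' : A w u = (Φ ^ (w:ℕ)) (f (u - w)) := rfl
    rw [hA', oreMatrix]
    rw [Matrix.of_apply]
    split
    · rename_i hle
      rw [← hpow_iter]
      refine congrArg (fun x => (Φ ^ ((w:Fin r):ℕ)) (f x)) (Fin.ext ?_)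
      rw [Fin.coe_sub]
      rw [show r - (w:ℕ) + (u:ℕ) = r + ((u:ℕ) - (w:ℕ)) by omega, Nat.add_mod_left,
        Nat.mod_eq_of_lt (by omega)]
    · rename_i hlt
      rw [one_mul, ← hpow_iter]
      refine congrArg (fun x => (Φ ^ ((w:Fin r):ℕ)) (f x)) (Fin.ext ?_)
      rw [Fin.coe_sub]
      have hu := u.isLt
      have hw := w.isLt
      rw [Nat.mod_eq_of_lt (by omega)]
      simp only [Fin.val_mk]
      omega
  have hdet : (oreMatrix r ⇑Φ (1 : L) f).det = B.det := by
    rw [hore, Matrix.det_transpose]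
    refine mul_left_cancel₀ hdetg ?_
    rw [mul_comm ((W g).det) A.det, ← Matrix.det_mul, hAW, Matrix.det_mul]
  have hfinal : ((n : ℚ) : WithTop ℚ) ≤ v B.det := by
    classical
    have hsum := hdetge B (fun j => if (j:ℕ) < n then ((1:ℚ) : WithTop ℚ) else 0)
      (fun i j => by
        show (if (j:ℕ) < n then ((1:ℚ) : WithTop ℚ) else 0) ≤ v (B i j)
        split
        · exact hB1 i j (by assumption)
        · exact hB0 i j)
    refine le_trans (le_of_eq ?_) hsum
    have h1 : ∑ j : Fin r, (if (j:ℕ) < n then ((1:ℚ):WithTop ℚ) else 0)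
        = (((Finset.univ.filter fun j : Fin r => (j:ℕ) < n).card : ℕ) : WithTop ℚ) :=
      Finset.sum_boole _ _
    have h2 : (Finset.univ.filter fun j : Fin r => (j:ℕ) < n).card = n := by
      rw [show (Finset.univ.filter fun j : Fin r => (j:ℕ) < n)
          = Finset.univ.map ⟨Fin.castLE hn, Fin.castLE_injective hn⟩ from ?_]
      · rw [Finset.card_map, Finset.card_univ, Fintype.card_fin]
      · ext j
        simp only [Finset.mem_filter, Finset.mem_univ, true_and, Finset.mem_map,
          Function.Embedding.coeFn_mk]
        constructor
        · intro hj
          exact ⟨⟨j.val, hj⟩, Fin.ext rfl⟩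
        · rintro ⟨i, rfl⟩
          exact i.isLt
    rw [h1, h2]
    norm_cast
  rw [hdet]
  exact le_trans (le_of_eq (by norm_cast)) hfinal
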